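/- Let y ~ N(ȳ, Σ_y) be a d-dimensional Gaussian with positive definite covariance, with ȳᵢ ≤ 0 for all i, and let rᵢ = −ȳᵢ/σᵢ where σᵢ = √((Σ_y)ᵢᵢ). Then 1 − P(yᵢ ≤ 0 for all i) ≤ Ψ_d(min_i rᵢ), where Ψ_d(r) = 1 − Φ_d(r²) and Φ_d is the chi-squared CDF with d degrees of freedom. -/

import Mathlib

open MeasureTheory ProbabilityTheory Matrix Real

noncomputable def mvGaussian {d : ℕ} (m : Fin d → ℝ) (S : Matrix (Fin d) (Fin d) ℝ)
    (hS : S.PosDef) : Measure (Fin d → ℝ) :=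
  (Measure.pi fun _ : Fin d => gaussianReal 0 1).map
    (fun z => m + ((hS.posSemidef.1.eigenvectorUnitary : Matrix (Fin d) (Fin d) ℝ) *
      diagonal (Real.sqrt ∘ hS.posSemidef.1.eigenvalues) *
      (star hS.posSemidef.1.eigenvectorUnitary : Matrix (Fin d) (Fin d) ℝ)).mulVec z)

noncomputable def stdNormalCDF (x : ℝ) : ℝ := cdf (gaussianReal 0 1) x

noncomputable def stdNormalQuantile (p : ℝ) : ℝ := Function.invFun stdNormalCDF p

noncomputable def chiSqCDF (d : ℕ) (x : ℝ) : ℝ := cdf (gammaMeasure (d / 2) (1 / 2)) x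

noncomputable def chiSqQuantile (d : ℕ) (p : ℝ) : ℝ := Function.invFun (chiSqCDF d) p

noncomputable def PsiInv (d : ℕ) (β : ℝ) : ℝ := Real.sqrt (chiSqQuantile d (1 - β))

noncomputable def Psi (d : ℕ) (r : ℝ) : ℝ := 1 - chiSqCDF d (r ^ 2)

noncomputable def lambdaMax {d : ℕ} (S : Matrix (Fin d) (Fin d) ℝ) (hS : S.IsHermitian) : ℝ :=
  ⨆ i, hS.eigenvalues i

noncomputable def regIncBeta (a b x : ℝ) : ℝ :=
  (∫ t in (0:ℝ)..x, t ^ (a - 1) * (1 - t) ^ (b - 1)) /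
    (∫ t in (0:ℝ)..1, t ^ (a - 1) * (1 - t) ^ (b - 1))

noncomputable def calI (d : ℕ) (x : ℝ) : ℝ :=
  regIncBeta ((d - 1 : ℝ) / 2) (1 / 2) (Real.sqrt (1 - x))



section Aux
open scoped ENNReal NNReal
open MeasureTheory ProbabilityTheory Matrix Real Set

lemma lintegral_pi_prod : ∀ {n : ℕ} (μ : Fin n → Measure ℝ), (∀ i, SigmaFinite (μ i)) →
    ∀ (f : Fin n → ℝ → ℝ≥0∞), (∀ i, Measurable (f i)) →
    ∫⁻ z, ∏ i, f i (z i) ∂Measure.pi μ = ∏ i, ∫⁻ x, f i x ∂μ i := by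
  intro n
  induction n with
  | zero => intro μ _ f _; simp [Measure.pi_of_empty]
  | succ n ih =>
    intro μ hμ f hf
    haveI := fun i => hμ i
    have mp := (measurePreserving_piFinSuccAbove μ 0).symm
    have hmeas : Measurable fun z : Fin (n+1) → ℝ => ∏ i, f i (z i) :=
      Finset.measurable_prod _ fun i _ => (hf i).comp (measurable_pi_apply i)
    rw [← mp.lintegral_comp hmeas]
    have : ∀ p : ℝ × (Fin n → ℝ),
        (∏ i, f i (((MeasurableEquiv.piFinSuccAbove (fun _ => ℝ) 0).symm p) i))
        = f 0 p.1 * ∏ i : Fin n, f i.succ (p.2 i) := by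
      intro p
      simp_rw [MeasurableEquiv.piFinSuccAbove_symm_apply, Fin.insertNthEquiv,
        Fin.prod_univ_succ, Fin.insertNth_zero]
      simp [Fin.zero_succAbove, Fin.cons_zero, Fin.cons_succ]
    simp_rw [this]
    rw [lintegral_prod_mul (f := f 0) (g := fun y : Fin n → ℝ => ∏ i, f i.succ (y i))
      ((hf 0).aemeasurable)
      ((Finset.measurable_prod _ fun i _ => (hf i.succ).comp (measurable_pi_apply i)).aemeasurable)]
    have h0 : (fun j : Fin n => μ (Fin.succAbove 0 j)) = fun j => μ j.succ := by
      funext j; rw [Fin.zero_succAbove]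
    rw [h0, ih _ (fun i => hμ _) _ (fun i => hf i.succ), Fin.prod_univ_succ]


lemma indicator_box {d : ℕ} (s : Fin d → Set ℝ) (g : ℝ → ℝ≥0∞) (z : Fin d → ℝ) :
    (Set.univ.pi s).indicator (fun z : Fin d → ℝ => ∏ i, g (z i)) z
      = ∏ i, (s i).indicator g (z i) := by
  by_cases h : z ∈ Set.univ.pi s
  · rw [Set.indicator_of_mem h]
    exact Finset.prod_congr rfl fun i _ => (Set.indicator_of_mem (h i (Set.mem_univ i)) g).symm
  · rw [Set.indicator_of_notMem h]
    rw [Set.mem_pi] at h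
    push_neg at h
    obtain ⟨i, _, hi⟩ := h
    exact (Finset.prod_eq_zero (Finset.mem_univ i) (Set.indicator_of_notMem hi g)).symm

lemma pi_gauss_eq (d : ℕ) :
    (Measure.pi fun _ : Fin d => gaussianReal 0 1)
      = (volume : Measure (Fin d → ℝ)).withDensity
          (fun z => ∏ i, gaussianPDF 0 1 (z i)) := by
  have hm : Measurable fun z : Fin d → ℝ => ∏ i, gaussianPDF 0 1 (z i) :=
    Finset.measurable_prod _ fun i _ =>
      (measurable_gaussianPDFReal 0 1).ennreal_ofReal.comp (measurable_pi_apply i)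
  refine Measure.pi_eq fun s hs => ?_
  rw [withDensity_apply _ (MeasurableSet.univ_pi hs), ← lintegral_indicator (MeasurableSet.univ_pi hs)]
  have : ∀ z, (Set.univ.pi s).indicator (fun z : Fin d → ℝ => ∏ i, gaussianPDF 0 1 (z i)) z
      = ∏ i, (s i).indicator (gaussianPDF 0 1) (z i) := indicator_box s _
  simp_rw [this]
  rw [(volume_pi : (volume : Measure (Fin d → ℝ)) = _), lintegral_pi_prod (fun _ => (volume : Measure ℝ)) (fun _ => inferInstance)
    (fun i => (s i).indicator (gaussianPDF 0 1))
    (fun i => (measurable_gaussianPDF 0 1).indicator (hs i))]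
  refine Finset.prod_congr rfl fun i _ => ?_
  rw [lintegral_indicator (hs i), gaussianReal_of_var_ne_zero 0 one_ne_zero,
    withDensity_apply _ (hs i)]

noncomputable def WW (d : ℕ) (c : ℝ) : ℝ → ℝ :=
  (Iic (Real.sqrt c)).indicator (fun y => y ^ ((d:ℝ) - 1) * rexp (-(y ^ 2 / 2)))

lemma integrable_gammaPDFReal {a r : ℝ} (ha : 0 < a) (hr : 0 < r) :
    Integrable (gammaPDFReal a r) := by
  refine ⟨(measurable_gammaPDFReal _ _).aestronglyMeasurable, ?_⟩
  rw [HasFiniteIntegral]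
  have : ∀ t : ℝ, ‖gammaPDFReal a r t‖ₑ = gammaPDF a r t := by
    intro t
    rw [gammaPDF, ← Real.enorm_eq_ofReal (gammaPDFReal_nonneg ha hr t)]
  simp_rw [this]
  rw [lintegral_gammaPDF_eq_one ha hr]
  exact ENNReal.one_lt_top

lemma chiSq_side {d : ℕ} (hd : 0 < d) (c : ℝ) (hc : 0 ≤ c) : chiSqCDF d c
    = 2 * ((1/2:ℝ) ^ ((d:ℝ)/2) / Real.Gamma ((d:ℝ)/2)) * ∫ y in Ioi (0:ℝ), WW d c y := by
  have hd2 : (0:ℝ) < (d:ℝ)/2 := by positivity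
  have hpdf_int : Integrable (gammaPDFReal ((d:ℝ)/2) (1/2)) :=
    integrable_gammaPDFReal hd2 (by norm_num)
  have step1 : chiSqCDF d c = ∫ t in Ioi (0:ℝ), (Iic c).indicator (gammaPDFReal ((d:ℝ)/2) (1/2)) t := by
    have h0 : chiSqCDF d c = ∫ t in Iic c, gammaPDFReal ((d:ℝ)/2) (1/2) t :=
      cdf_gammaMeasure_eq_integral hd2 (by norm_num) c
    rw [h0, ← integral_indicator measurableSet_Iic,
      ← integral_add_compl measurableSet_Iic (hpdf_int.indicator measurableSet_Iic), compl_Iic]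
    have hzero : ∫ t in Iic (0:ℝ), (Iic c).indicator (gammaPDFReal ((d:ℝ)/2) (1/2)) t = 0 := by
      refine integral_eq_zero_of_ae ?_
      have hne : ∀ᵐ t : ℝ, t ≠ 0 := by
        rw [ae_iff]; simpa using Real.volume_singleton (a := 0)
      filter_upwards [ae_restrict_mem measurableSet_Iic,
        hne.filter_mono (ae_mono Measure.restrict_le_self)] with t ht htne
      have htlt : t < 0 := lt_of_le_of_ne ht htne
      by_cases hmem : t ∈ Iic c
      · rw [Set.indicator_of_mem hmem, gammaPDFReal, if_neg (not_le.mpr htlt)]; rfl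
      · rw [Set.indicator_of_notMem hmem]; rfl
    rw [hzero, zero_add]
  have sub := integral_comp_rpow_Ioi_of_pos
    (g := fun t => (Iic c).indicator (gammaPDFReal ((d:ℝ)/2) (1/2)) t) (p := 2) two_pos
  rw [step1, ← sub, ← integral_const_mul]
  refine setIntegral_congr_fun measurableSet_Ioi fun y hy => ?_
  have hy0 : (0:ℝ) < y := hy
  have hy2 : y ^ ((2:ℝ)) = y ^ 2 := Real.rpow_two y
  have hy21 : y ^ ((2:ℝ) - 1) = y := by norm_num
  rw [smul_eq_mul, hy2, hy21]
  by_cases hmem : y ^ 2 ≤ c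
  · have hyle : y ≤ Real.sqrt c := (Real.le_sqrt hy0.le hc).mpr hmem
    rw [Set.indicator_of_mem (mem_Iic.mpr hmem), WW, Set.indicator_of_mem (mem_Iic.mpr hyle),
      gammaPDFReal, if_pos (by positivity)]
    have hpow : (y ^ 2 : ℝ) ^ ((d:ℝ)/2 - 1) = y ^ ((d:ℝ) - 2) := by
      rw [← Real.rpow_natCast y 2, ← Real.rpow_mul hy0.le]
      congr 1; push_cast; ring
    have hmono : y * y ^ ((d:ℝ) - 2) = y ^ ((d:ℝ) - 1) := by
      nth_rewrite 1 [← Real.rpow_one y]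
      rw [← Real.rpow_add hy0]; congr 1; ring
    rw [hpow, show -((1:ℝ)/2 * y ^ 2) = -(y ^ 2 / 2) by ring, ← hmono]
    ring
  · rw [Set.indicator_of_notMem (fun h => hmem (mem_Iic.mp h)), WW,
      Set.indicator_of_notMem, mul_zero, mul_zero]
    intro h
    exact hmem ((Real.le_sqrt hy0.le hc).mp (mem_Iic.mp h))

lemma gauss_side {d : ℕ} (hd : 0 < d) (c : ℝ) (hc : 0 ≤ c) :
    (Measure.pi fun _ : Fin d => gaussianReal 0 1) {z | ∑ i, z i ^ 2 ≤ c}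
      = ENNReal.ofReal ((d : ℝ) * (Real.sqrt π ^ d / Real.Gamma ((d:ℝ)/2 + 1)) *
          (((Real.sqrt (2 * π))⁻¹) ^ d * ∫ y in Ioi (0:ℝ), WW d c y)) := by
  classical
  set E := EuclideanSpace ℝ (Fin d)
  set R := Real.sqrt c with hR
  set K : ℝ := ((Real.sqrt (2 * π))⁻¹) ^ d with hK
  have hA : MeasurableSet {z : Fin d → ℝ | ∑ i, z i ^ 2 ≤ c} :=
    measurableSet_le (Finset.measurable_sum _ fun i _ => (measurable_pi_apply i).pow_const 2)
      measurable_const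
  rw [pi_gauss_eq, withDensity_apply _ hA]
  have hD : ∀ z : Fin d → ℝ, ∏ i, gaussianPDF 0 1 (z i)
      = ENNReal.ofReal (∏ i, gaussianPDFReal 0 1 (z i)) := fun z =>
    (ENNReal.ofReal_prod_of_nonneg fun i _ => gaussianPDFReal_nonneg 0 1 (z i)).symm
  simp_rw [hD]
  have hInt : Integrable (fun z : Fin d → ℝ => ∏ i, gaussianPDFReal 0 1 (z i))
      (volume.restrict {z : Fin d → ℝ | ∑ i, z i ^ 2 ≤ c}) :=
    (Integrable.fintype_prod (𝕜 := ℝ) fun _ : Fin d => integrable_gaussianPDFReal 0 1).restrict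
  rw [← ofReal_integral_eq_lintegral_ofReal hInt
    (ae_of_all _ fun z => Finset.prod_nonneg fun i _ => gaussianPDFReal_nonneg 0 1 (z i))]
  congr 1
  -- transfer to EuclideanSpace
  have mp := EuclideanSpace.volume_preserving_symm_measurableEquiv_toLp (Fin d)
  rw [← mp.setIntegral_preimage_emb (MeasurableEquiv.measurableEmbedding _)
    (fun z : Fin d → ℝ => ∏ i, gaussianPDFReal 0 1 (z i)) _]
  have hpre : (MeasurableEquiv.toLp 2 (Fin d → ℝ)).symm ⁻¹' {z : Fin d → ℝ | ∑ i, z i ^ 2 ≤ c}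
      = Metric.closedBall (0 : E) R := by
    ext x
    have hnorm : ‖x‖ = Real.sqrt (∑ i, x i ^ 2) := by
      rw [EuclideanSpace.norm_eq]
      congr 1
      exact Finset.sum_congr rfl fun i _ => by rw [Real.norm_eq_abs, sq_abs]
    simp only [Set.mem_preimage, Set.mem_setOf_eq, Metric.mem_closedBall, dist_zero_right, hnorm,
      hR]
    exact (Real.sqrt_le_sqrt_iff (by positivity)).symm
  rw [hpre]
  have hpdf : ∀ t : ℝ, gaussianPDFReal 0 1 t = (Real.sqrt (2*π))⁻¹ * rexp (-(t^2/2)) := by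
    intro t
    rw [gaussianPDFReal]
    push_cast
    norm_num
    left
    ring
  have hg : ∀ x : E, (∏ i, gaussianPDFReal 0 1 ((MeasurableEquiv.toLp 2 (Fin d → ℝ)).symm x i))
      = K * rexp (-(‖x‖ ^ 2 / 2)) := by
    intro x
    have hxi : ∀ i, (MeasurableEquiv.toLp 2 (Fin d → ℝ)).symm x i = x i := fun i => rfl
    have hxn : ‖x‖ ^ 2 = ∑ i, x i ^ 2 := by
      rw [EuclideanSpace.norm_eq, Real.sq_sqrt (by positivity)]
      exact Finset.sum_congr rfl fun i _ => by rw [Real.norm_eq_abs, sq_abs]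
    simp_rw [hxi, hpdf]
    rw [Finset.prod_mul_distrib, Finset.prod_const, ← Real.exp_sum, Finset.card_univ,
      Fintype.card_fin, hK]
    congr 1
    rw [hxn, Finset.sum_div, ← Finset.sum_neg_distrib]
  have hcongr : ∫ x in Metric.closedBall (0:E) R,
        (∏ i, gaussianPDFReal 0 1 ((MeasurableEquiv.toLp 2 (Fin d → ℝ)).symm x i))
      = ∫ x : E, ((Iic R).indicator (fun y => K * rexp (-(y^2/2)))) ‖x‖ := by
    rw [← integral_indicator measurableSet_closedBall]
    refine integral_congr_ae (ae_of_all _ fun x => ?_)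
    dsimp only
    by_cases hx : ‖x‖ ≤ R
    · rw [Set.indicator_of_mem (mem_closedBall_zero_iff.mpr hx),
        Set.indicator_of_mem (mem_Iic.mpr hx), hg]
    · rw [Set.indicator_of_notMem (fun hm => hx (mem_closedBall_zero_iff.mp hm)),
        Set.indicator_of_notMem (fun hm => hx (mem_Iic.mp hm))]
  haveI : Nonempty (Fin d) := Fin.pos_iff_nonempty.mp hd
  haveI : Nontrivial E := by
    refine Module.nontrivial_of_finrank_pos (R := ℝ) (M := E) ?_
    rw [finrank_euclideanSpace, Fintype.card_fin]
    exact hd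
  have hpolar := integral_fun_norm_addHaar (volume : Measure E)
    ((Iic R).indicator (fun y => K * rexp (-(y^2/2))))
  have hdim : Module.finrank ℝ E = d := by rw [finrank_euclideanSpace, Fintype.card_fin]
  rw [hdim] at hpolar
  have hball : (volume : Measure E).real (Metric.ball 0 1)
      = Real.sqrt π ^ d / Real.Gamma ((d:ℝ)/2 + 1) := by
    rw [measureReal_def, EuclideanSpace.volume_ball, Fintype.card_fin]
    have hpos : (0:ℝ) ≤ Real.sqrt π ^ d / Real.Gamma ((d:ℝ)/2 + 1) :=
      div_nonneg (by positivity) (Real.Gamma_pos_of_pos (by positivity)).le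
    rw [ENNReal.ofReal_one, one_pow, one_mul, ENNReal.toReal_ofReal hpos]
  rw [hcongr, hpolar, hball]
  have hinner : ∫ y in Ioi (0:ℝ), y ^ (d - 1) • ((Iic R).indicator (fun y => K * rexp (-(y^2/2)))) y
      = K * ∫ y in Ioi (0:ℝ), WW d c y := by
    rw [← integral_const_mul]
    refine setIntegral_congr_fun measurableSet_Ioi fun y hy => ?_
    have hy0 : (0:ℝ) < y := hy
    have hyp : (y : ℝ) ^ (d - 1) = y ^ ((d:ℝ) - 1) := by
      rw [← Real.rpow_natCast y (d - 1), Nat.cast_sub hd, Nat.cast_one]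
    by_cases hx : y ≤ R
    · rw [smul_eq_mul, Set.indicator_of_mem (mem_Iic.mpr hx), WW,
        Set.indicator_of_mem (mem_Iic.mpr hx), hyp]
      ring
    · rw [smul_eq_mul, Set.indicator_of_notMem (fun hm => hx (mem_Iic.mp hm)), WW,
        Set.indicator_of_notMem (fun hm => hx (mem_Iic.mp hm))]
      ring
  rw [hinner, nsmul_eq_mul, smul_eq_mul]
  ring

lemma const_ident (d : ℕ) (hd : 0 < d) :
    (d:ℝ) * (Real.sqrt π ^ d / Real.Gamma ((d:ℝ)/2 + 1)) * ((Real.sqrt (2*π))⁻¹)^d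
      = 2 * ((1/2:ℝ) ^ ((d:ℝ)/2) / Real.Gamma ((d:ℝ)/2)) := by
  have hd2 : (0:ℝ) < (d:ℝ)/2 := by positivity
  have hG : Real.Gamma ((d:ℝ)/2 + 1) = ((d:ℝ)/2) * Real.Gamma ((d:ℝ)/2) :=
    Real.Gamma_add_one hd2.ne'
  have hGpos : 0 < Real.Gamma ((d:ℝ)/2) := Real.Gamma_pos_of_pos hd2
  have hsπ : (0:ℝ) < Real.sqrt π := Real.sqrt_pos.mpr Real.pi_pos
  have h2' : ((Real.sqrt 2)⁻¹ : ℝ)^d = (1/2:ℝ)^((d:ℝ)/2) := by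
    rw [Real.sqrt_eq_rpow, ← Real.rpow_neg (by norm_num : (0:ℝ) ≤ 2),
      ← Real.rpow_natCast ((2:ℝ) ^ (-(1/2):ℝ)) d, ← Real.rpow_mul (by norm_num : (0:ℝ) ≤ 2),
      one_div, Real.inv_rpow (by norm_num : (0:ℝ) ≤ 2),
      ← Real.rpow_neg (by norm_num : (0:ℝ) ≤ 2)]
    congr 1
    ring
  have h2 : ((Real.sqrt (2*π))⁻¹ : ℝ)^d = (1/2:ℝ)^((d:ℝ)/2) * ((Real.sqrt π)⁻¹)^d := by
    rw [Real.sqrt_mul (by norm_num : (0:ℝ) ≤ 2), mul_inv, mul_pow, h2']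
  have hππ : (Real.sqrt π:ℝ)^d * ((Real.sqrt π)⁻¹)^d = 1 := by
    rw [← mul_pow, mul_inv_cancel₀ hsπ.ne', one_pow]
  have hd0 : (d:ℝ) ≠ 0 := Nat.cast_ne_zero.mpr hd.ne'
  rw [hG, h2]
  calc (d:ℝ) * (Real.sqrt π ^ d / (((d:ℝ)/2) * Real.Gamma ((d:ℝ)/2)))
        * ((1/2:ℝ)^((d:ℝ)/2) * ((Real.sqrt π)⁻¹)^d)
      = (Real.sqrt π ^ d * ((Real.sqrt π)⁻¹)^d)
        * ((1/2:ℝ)^((d:ℝ)/2) * ((d:ℝ) / (((d:ℝ)/2) * Real.Gamma ((d:ℝ)/2)))) := by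
        ring
    _ = (1/2:ℝ)^((d:ℝ)/2) * ((d:ℝ) / (((d:ℝ)/2) * Real.Gamma ((d:ℝ)/2))) := by
        rw [hππ, one_mul]
    _ = 2 * ((1/2:ℝ)^((d:ℝ)/2) / Real.Gamma ((d:ℝ)/2)) := by
        field_simp


lemma gauss_chiSq {d : ℕ} (hd : 0 < d) (c : ℝ) (hc : 0 ≤ c) :
    (Measure.pi fun _ : Fin d => gaussianReal 0 1) {z | ∑ i, z i ^ 2 ≤ c}
      = ENNReal.ofReal (chiSqCDF d c) := by
  rw [gauss_side hd c hc, chiSq_side hd c hc]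
  congr 1
  have hconst := const_ident d hd
  linear_combination (∫ y in Set.Ioi (0:ℝ), WW d c y) * hconst

end Aux

noncomputable def mvSqrt {d : ℕ} {S : Matrix (Fin d) (Fin d) ℝ} (hS : S.PosDef) :
    Matrix (Fin d) (Fin d) ℝ :=
  (hS.posSemidef.1.eigenvectorUnitary : Matrix (Fin d) (Fin d) ℝ) *
      diagonal (Real.sqrt ∘ hS.posSemidef.1.eigenvalues) *
      (star hS.posSemidef.1.eigenvectorUnitary : Matrix (Fin d) (Fin d) ℝ)

lemma mvSqrt_isHermitian {d : ℕ} {S : Matrix (Fin d) (Fin d) ℝ} (hS : S.PosDef) :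
    (mvSqrt hS).IsHermitian := by
  unfold mvSqrt
  rw [IsHermitian, conjTranspose_mul, conjTranspose_mul, diagonal_conjTranspose,
    ← star_eq_conjTranspose, ← star_eq_conjTranspose, star_star, star_trivial, Matrix.mul_assoc]

lemma mvSqrt_mul_self {d : ℕ} {S : Matrix (Fin d) (Fin d) ℝ} (hS : S.PosDef) :
    mvSqrt hS * mvSqrt hS = S := by
  have hU : (star hS.posSemidef.1.eigenvectorUnitary : Matrix (Fin d) (Fin d) ℝ) *
      (hS.posSemidef.1.eigenvectorUnitary : Matrix (Fin d) (Fin d) ℝ) = 1 :=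
    Unitary.coe_star_mul_self _
  have hD : diagonal (Real.sqrt ∘ hS.posSemidef.1.eigenvalues) *
      diagonal (Real.sqrt ∘ hS.posSemidef.1.eigenvalues) = diagonal hS.posSemidef.1.eigenvalues := by
    rw [diagonal_mul_diagonal]; congr 1; funext i
    exact Real.mul_self_sqrt (hS.posSemidef.eigenvalues_nonneg i)
  unfold mvSqrt
  conv_rhs => rw [hS.posSemidef.1.spectral_theorem]
  rw [Unitary.conjStarAlgAut_apply]
  calc _ = (hS.posSemidef.1.eigenvectorUnitary : Matrix (Fin d) (Fin d) ℝ) *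
      (diagonal (Real.sqrt ∘ hS.posSemidef.1.eigenvalues) *
      ((star hS.posSemidef.1.eigenvectorUnitary : Matrix (Fin d) (Fin d) ℝ) *
      (hS.posSemidef.1.eigenvectorUnitary : Matrix (Fin d) (Fin d) ℝ)) *
      diagonal (Real.sqrt ∘ hS.posSemidef.1.eigenvalues)) *
      (star hS.posSemidef.1.eigenvectorUnitary : Matrix (Fin d) (Fin d) ℝ) := by
        simp only [Matrix.mul_assoc]
    _ = _ := by rw [hU, Matrix.mul_one, hD]; rfl

theorem stmt7 {d : ℕ} (hd : 0 < d) (ybar : Fin d → ℝ) (S : Matrix (Fin d) (Fin d) ℝ)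
    (hS : S.PosDef) (hy : ∀ i, ybar i ≤ 0) :
    1 - ((mvGaussian ybar S hS) {v | ∀ i, v i ≤ 0}).toReal
      ≤ Psi d (⨅ i, -ybar i / Real.sqrt (S i i)) := by

  classical
  haveI : Nonempty (Fin d) := Fin.pos_iff_nonempty.mp hd
  set r := ⨅ i, -ybar i / Real.sqrt (S i i) with hrdef
  have hr0 : 0 ≤ r := le_ciInf fun i => div_nonneg (neg_nonneg.2 (hy i)) (Real.sqrt_nonneg _)
  set μ := Measure.pi fun _ : Fin d => gaussianReal 0 1 with hμ
  have hTmeas : Measurable fun z : Fin d → ℝ => ybar + ((mvSqrt hS)).mulVec z := by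
    refine Measurable.add measurable_const ?_
    have : Continuous fun z : Fin d → ℝ => ((mvSqrt hS)).mulVec z := by
      have := LinearMap.continuous_of_finiteDimensional (Matrix.mulVecLin (mvSqrt hS))
      exact this
    exact this.measurable
  have hAmeas : MeasurableSet {v : Fin d → ℝ | ∀ i, v i ≤ 0} := by
    rw [Set.setOf_forall]
    exact MeasurableSet.iInter fun i =>
      measurableSet_le (measurable_pi_apply i) measurable_const
  have hmap : (mvGaussian ybar S hS) {v | ∀ i, v i ≤ 0}
      = μ ((fun z => ybar + ((mvSqrt hS)).mulVec z) ⁻¹' {v | ∀ i, v i ≤ 0}) := by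
    rw [mvGaussian]; exact Measure.map_apply hTmeas hAmeas
  -- diagonal entries
  have hSii : ∀ i, 0 < S i i := by
    intro i
    exact hS.diag_pos
  have hQsym : ∀ i j, (mvSqrt hS) j i = (mvSqrt hS) i j := fun i j => by
    have := (mvSqrt_isHermitian hS).apply i j
    rwa [star_trivial] at this
  have hQrow : ∀ i, ∑ j, (mvSqrt hS) i j ^ 2 = S i i := by
    intro i
    have := congrFun (congrFun (mvSqrt_mul_self hS) i) i
    rw [Matrix.mul_apply] at this
    rw [← this]
    exact Finset.sum_congr rfl fun j _ => by rw [sq, hQsym i j]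
  -- inclusion
  have hsub : {z : Fin d → ℝ | ∑ i, z i ^ 2 ≤ r ^ 2}
      ⊆ (fun z => ybar + ((mvSqrt hS)).mulVec z) ⁻¹' {v | ∀ i, v i ≤ 0} := by
    intro z hz i
    simp only [Set.mem_setOf_eq] at hz
    have hdot : (∑ j, (mvSqrt hS) i j * z j) ^ 2 ≤ (S i i) * ∑ j, z j ^ 2 := by
      have := Finset.sum_mul_sq_le_sq_mul_sq Finset.univ (fun j => (mvSqrt hS) i j) (fun j => z j)
      calc (∑ j, (mvSqrt hS) i j * z j) ^ 2 ≤ (∑ j, (mvSqrt hS) i j ^ 2) * ∑ j, z j ^ 2 := this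
        _ = (S i i) * ∑ j, z j ^ 2 := by rw [hQrow]
    have habs : |∑ j, (mvSqrt hS) i j * z j| ≤ Real.sqrt ((S i i) * ∑ j, z j ^ 2) :=
      Real.abs_le_sqrt hdot
    have hbound : ∑ j, (mvSqrt hS) i j * z j ≤ Real.sqrt (S i i) * r := by
      refine le_trans (le_abs_self _) (le_trans habs ?_)
      rw [Real.sqrt_mul (hSii i).le]
      refine mul_le_mul_of_nonneg_left ?_ (Real.sqrt_nonneg _)
      calc Real.sqrt (∑ j, z j ^ 2) ≤ Real.sqrt (r ^ 2) := Real.sqrt_le_sqrt hz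
        _ = r := by rw [Real.sqrt_sq hr0]
    have hbdd : BddBelow (Set.range fun j => -ybar j / Real.sqrt (S j j)) := by
      refine ⟨0, fun x hx => ?_⟩
      obtain ⟨j, rfl⟩ := hx
      exact div_nonneg (neg_nonneg.2 (hy j)) (Real.sqrt_nonneg _)
    have hri : r ≤ -ybar i / Real.sqrt (S i i) := ciInf_le hbdd i
    have hfin : Real.sqrt (S i i) * r ≤ -ybar i := by
      have hs : 0 < Real.sqrt (S i i) := Real.sqrt_pos.mpr (hSii i)
      calc Real.sqrt (S i i) * r ≤ Real.sqrt (S i i) * (-ybar i / Real.sqrt (S i i)) :=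
            mul_le_mul_of_nonneg_left hri hs.le
        _ = -ybar i := by field_simp
    show ybar i + ((mvSqrt hS)).mulVec z i ≤ 0
    have heq : ((mvSqrt hS)).mulVec z i = ∑ j, (mvSqrt hS) i j * z j := rfl
    rw [heq]
    linarith [le_trans hbound hfin]
  -- measures
  have hkey := gauss_chiSq hd (r ^ 2) (by positivity)
  have hmono : ENNReal.ofReal (chiSqCDF d (r ^ 2))
      ≤ (mvGaussian ybar S hS) {v | ∀ i, v i ≤ 0} := by
    rw [hmap, ← hkey]
    exact measure_mono hsub
  haveI : IsProbabilityMeasure (mvGaussian ybar S hS) := by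
    rw [mvGaussian]
    exact Measure.isProbabilityMeasure_map hTmeas.aemeasurable
  have htoReal : chiSqCDF d (r ^ 2) ≤ ((mvGaussian ybar S hS) {v | ∀ i, v i ≤ 0}).toReal := by
    have h1 := ENNReal.toReal_mono (measure_ne_top _ _) hmono
    have hnn : (0:ℝ) ≤ chiSqCDF d (r ^ 2) := cdf_nonneg _ _
    rwa [ENNReal.toReal_ofReal hnn] at h1
  show 1 - ((mvGaussian ybar S hS) {v | ∀ i, v i ≤ 0}).toReal ≤ 1 - chiSqCDF d (r ^ 2)
  linarith
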